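/- arXiv:2508.05184 — 4 statements merged into one kernel-verified Lean document; each statement's English description precedes it below -/
import Mathlib

section
/- An integral domain R is a Prüfer domain if and only if for every prime ideal p of R, the localization R_p is a valuation domain. -/
/-- A Prüfer domain: every finitely generated nonzero ideal is invertible
as a fractional ideal. -/
def IsPruferDomain (R : Type*) [CommRing R] [IsDomain R] : Prop :=
  ∀ I : Ideal R, I.FG → I ≠ ⊥ →
    IsUnit (I : FractionalIdeal (nonZeroDivisors R) (FractionRing R))

lemma exists_dvd_all {α β : Type*} [Monoid α] (htot : ∀ a b : α, a ∣ b ∨ b ∣ a)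
    (s : Finset β) (f : β → α) (hs : s.Nonempty) : ∃ k ∈ s, ∀ t ∈ s, f k ∣ f t := by
  classical
  induction s using Finset.induction with
  | empty => exact absurd hs (by simp)
  | @insert b s hnot ih =>
    rcases s.eq_empty_or_nonempty with rfl | hne
    · exact ⟨b, by simp⟩
    · obtain ⟨k, hk, hdvd⟩ := ih hne
      rcases htot (f k) (f b) with h | h
      · exact ⟨k, Finset.mem_insert_of_mem hk, fun t ht => by
          rcases Finset.mem_insert.mp ht with rfl | ht
          · exact h
          · exact hdvd t ht⟩
      · exact ⟨b, Finset.mem_insert_self _ _, fun t ht => by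
          rcases Finset.mem_insert.mp ht with rfl | ht
          · exact dvd_rfl
          · exact h.trans (hdvd t ht)⟩

lemma pruefer_dvd {R : Type*} [CommRing R] [IsDomain R] (h : IsPruferDomain R)
    (p : Ideal R) [hp : p.IsPrime] (a b : R) :
    algebraMap R (Localization.AtPrime p) a ∣ algebraMap R (Localization.AtPrime p) b ∨
    algebraMap R (Localization.AtPrime p) b ∣ algebraMap R (Localization.AtPrime p) a := by
  classical
  rcases eq_or_ne a 0 with rfl | ha
  · right; simp
  rcases eq_or_ne b 0 with rfl | hb
  · left; simp
  set K := FractionRing R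
  set I : Ideal R := Ideal.span {a, b} with hI
  have hIfg : I.FG := ⟨{a, b}, by simp [hI]⟩
  have hIne : I ≠ ⊥ := by
    intro hbot
    have : a ∈ I := Ideal.subset_span (by simp)
    rw [hbot] at this
    exact ha (Ideal.mem_bot.mp this)
  obtain ⟨u, hu⟩ := h I hIfg hIne
  -- I * J = 1 with J := u⁻¹
  set J : FractionalIdeal (nonZeroDivisors R) K := ↑u⁻¹ with hJ
  have hmul : (I : FractionalIdeal (nonZeroDivisors R) K) * J = 1 := by
    rw [← hu, hJ, ← Units.val_mul, mul_inv_cancel, Units.val_one]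
  -- decompose 1
  have h1 : (1 : K) ∈ ((I : FractionalIdeal (nonZeroDivisors R) K) * J) := by
    rw [hmul]; exact FractionalIdeal.one_mem_one _
  have hIdec : (I : FractionalIdeal (nonZeroDivisors R) K) =
      FractionalIdeal.spanSingleton (nonZeroDivisors R) (algebraMap R K a) ⊔
      FractionalIdeal.spanSingleton (nonZeroDivisors R) (algebraMap R K b) := by
    rw [hI, Ideal.span_insert, FractionalIdeal.coeIdeal_sup,
      FractionalIdeal.coeIdeal_span_singleton, FractionalIdeal.coeIdeal_span_singleton,
      ← FractionalIdeal.sup_eq_add]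
  rw [hIdec, FractionalIdeal.sup_eq_add, add_mul, FractionalIdeal.mem_add] at h1
  obtain ⟨x, hx, y, hy, hxy⟩ := h1
  rw [FractionalIdeal.mem_singleton_mul] at hx hy
  obtain ⟨u', hu', rfl⟩ := hx
  obtain ⟨v', hv', rfl⟩ := hy
  -- products land in R
  have haI : algebraMap R K a ∈ (I : FractionalIdeal (nonZeroDivisors R) K) :=
    FractionalIdeal.mem_coeIdeal_of_mem _ (Ideal.subset_span (by simp))
  have hbI : algebraMap R K b ∈ (I : FractionalIdeal (nonZeroDivisors R) K) :=
    FractionalIdeal.mem_coeIdeal_of_mem _ (Ideal.subset_span (by simp))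
  have memR : ∀ c : R, c ∈ I → ∀ z ∈ J, ∃ r : R, algebraMap R K r = algebraMap R K c * z := by
    intro c hc z hz
    have : algebraMap R K c * z ∈ ((I : FractionalIdeal (nonZeroDivisors R) K) * J) :=
      FractionalIdeal.mul_mem_mul (FractionalIdeal.mem_coeIdeal_of_mem _ hc) hz
    rw [hmul] at this
    exact (FractionalIdeal.mem_one_iff _).mp this
  obtain ⟨r, hr⟩ := memR a (Ideal.subset_span (by simp)) u' hu'
  obtain ⟨s, hs⟩ := memR b (Ideal.subset_span (by simp)) u' hu'
  obtain ⟨t, ht⟩ := memR a (Ideal.subset_span (by simp)) v' hv'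
  obtain ⟨w, hw⟩ := memR b (Ideal.subset_span (by simp)) v' hv'
  have hinj : Function.Injective (algebraMap R K) := IsFractionRing.injective R K
  have hrw : r + w = 1 := by
    apply hinj
    rw [map_add, hr, hw, map_one, hxy]
  have hbr : b * r = a * s := by
    apply hinj
    rw [map_mul, map_mul, hr, hs]; ring
  have haw : a * w = b * t := by
    apply hinj
    rw [map_mul, map_mul, hw, ht]; ring
  -- now in R_p
  have hmem : r ∈ p.primeCompl ∨ w ∈ p.primeCompl := by
    by_contra hcon
    push_neg at hcon
    simp only [Ideal.primeCompl, Submonoid.mem_mk, Subsemigroup.mem_mk, Set.mem_compl_iff,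
      not_not] at hcon
    have : (1 : R) ∈ p := hrw ▸ p.add_mem hcon.1 hcon.2
    exact hp.ne_top (p.eq_top_iff_one.mpr this)
  set f := algebraMap R (Localization.AtPrime p)
  rcases hmem with hm | hm
  · left
    have hu : IsUnit (f r) := (IsLocalization.AtPrime.isUnit_to_map_iff _ p r).mpr hm
    have : f b * f r = f a * f s := by rw [← map_mul, ← map_mul, hbr]
    refine (hu.dvd_mul_right).mp ⟨f s, ?_⟩
    exact this
  · right
    have hu : IsUnit (f w) := (IsLocalization.AtPrime.isUnit_to_map_iff _ p w).mpr hm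
    have : f a * f w = f b * f t := by rw [← map_mul, ← map_mul, haw]
    refine (hu.dvd_mul_right).mp ⟨f t, ?_⟩
    exact this
lemma valuation_to_pruefer {R : Type*} [CommRing R] [IsDomain R]
    (h : ∀ (p : Ideal R) (_ : p.IsPrime), ValuationRing (Localization.AtPrime p)) :
    IsPruferDomain R := by
  classical
  intro I hfg hne
  set K := FractionRing R
  set I' : FractionalIdeal (nonZeroDivisors R) K := ↑I with hI'
  have hI'ne : I' ≠ 0 := by
    simpa [hI'] using (FractionalIdeal.coeIdeal_ne_zero (K := K)).mpr hne
  obtain ⟨J₀, hJ₀⟩ := FractionalIdeal.le_one_iff_exists_coeIdeal.mp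
    (FractionalIdeal.mul_one_div_le_one (I := I'))
  have hmain : I' * (1 / I') = 1 := by
    by_contra hne1
    have hJ₀top : J₀ ≠ ⊤ := by
      rintro rfl
      exact hne1 (by rw [← hJ₀, FractionalIdeal.coeIdeal_top])
    obtain ⟨m, hm, hJm⟩ := Ideal.exists_le_maximal J₀ hJ₀top
    haveI hmp : m.IsPrime := hm.isPrime
    haveI := h m hmp
    set Rm := Localization.AtPrime m
    set f := algebraMap R Rm with hf
    have hinj : Function.Injective f :=
      IsLocalization.injective Rm m.primeCompl_le_nonZeroDivisors
    obtain ⟨T, hT⟩ := hfg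
    have hTne : T.Nonempty := by
      rcases T.eq_empty_or_nonempty with rfl | hne'
      · exact absurd (by simpa using hT.symm) hne
      · exact hne'
    have htot : ∀ x y : Rm, x ∣ y ∨ y ∣ x := fun x y => ValuationRing.dvd_total x y
    obtain ⟨k, hkT, hk⟩ := exists_dvd_all htot T (fun t => f t) hTne
    have hk0 : k ≠ 0 := by
      rintro rfl
      apply hne
      rw [← hT, ← le_bot_iff, Ideal.span_le]
      intro t ht
      have : f 0 ∣ f t := hk t ht
      have ht0 : f t = 0 := by simpa using this
      simpa [Ideal.mem_bot] using hinj (by simpa using ht0)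
    have key : ∀ t ∈ T, ∃ s : m.primeCompl, ∃ r : R, t * s = k * r := by
      intro t ht
      obtain ⟨c, hc⟩ := hk t ht
      obtain ⟨⟨r, s⟩, hrs : IsLocalization.mk' Rm r s = c⟩ := IsLocalization.mk'_surjective m.primeCompl c
      refine ⟨s, r, hinj ?_⟩
      rw [map_mul, map_mul]
      calc f t * f s = f k * c * f s := by rw [hc]
        _ = f k * (IsLocalization.mk' Rm r s * f s) := by rw [hrs]; ring
        _ = f k * f r := by rw [IsLocalization.mk'_spec]
    choose sfun rfun hfun using fun t : T => key t t.2
    set S : R := ∏ t ∈ T.attach, (sfun t : R) with hSdef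
    have hS : S ∈ m.primeCompl :=
      Submonoid.prod_mem _ (fun t _ => (sfun t).2)
    have hkK : algebraMap R K k ≠ 0 := by
      simpa using (map_ne_zero_iff _ (IsFractionRing.injective R K)).mpr hk0
    set z : K := algebraMap R K S / algebraMap R K k with hz
    -- z ∈ 1 / I'
    have hzmem : z ∈ (1 : FractionalIdeal (nonZeroDivisors R) K) / I' := by
      rw [FractionalIdeal.mem_div_iff_of_ne_zero hI'ne]
      intro y hy
      obtain ⟨x, hx, rfl⟩ := (FractionalIdeal.mem_coeIdeal _).mp hy
      rw [FractionalIdeal.mem_one_iff]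
      rw [← hT] at hx
      refine Submodule.span_induction ?_ ?_ ?_ ?_ hx
      · intro t ht
        have htT : t ∈ T := ht
        have hfac : S = (sfun ⟨t, htT⟩ : R) * ∏ u ∈ T.attach.erase ⟨t, htT⟩, (sfun u : R) :=
          (Finset.mul_prod_erase T.attach _ (Finset.mem_attach T ⟨t, htT⟩)).symm
        refine ⟨(∏ u ∈ T.attach.erase ⟨t, htT⟩, (sfun u : R)) * rfun ⟨t, htT⟩, ?_⟩
        rw [hz, div_mul_eq_mul_div, eq_div_iff hkK, ← map_mul, ← map_mul]
        congr 1
        calc (∏ u ∈ T.attach.erase ⟨t, htT⟩, (sfun u : R)) * rfun ⟨t, htT⟩ * k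
            = (∏ u ∈ T.attach.erase ⟨t, htT⟩, (sfun u : R)) * (k * rfun ⟨t, htT⟩) := by ring
          _ = (∏ u ∈ T.attach.erase ⟨t, htT⟩, (sfun u : R)) * (t * sfun ⟨t, htT⟩) := by
              rw [← hfun ⟨t, htT⟩]
          _ = S * t := by rw [hfac]; ring
      · exact ⟨0, by simp⟩
      · rintro x y - - ⟨cx, hcx⟩ ⟨cy, hcy⟩
        exact ⟨cx + cy, by rw [map_add, hcx, hcy, map_add, mul_add]⟩
      · rintro r x - ⟨c, hc⟩
        refine ⟨r * c, ?_⟩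
        rw [map_mul, hc, smul_eq_mul, map_mul]
        ring
    -- contradiction: S ∈ m
    have hkI : algebraMap R K k ∈ I' :=
      FractionalIdeal.mem_coeIdeal_of_mem _ (hT ▸ Ideal.subset_span hkT)
    have hSmem : algebraMap R K S ∈ I' * (1 / I') := by
      have := FractionalIdeal.mul_mem_mul hkI hzmem
      rwa [hz, mul_div_cancel₀ _ hkK] at this
    rw [← hJ₀] at hSmem
    obtain ⟨S', hS', hSe⟩ := (FractionalIdeal.mem_coeIdeal _).mp hSmem
    have : S ∈ J₀ := by
      rwa [IsFractionRing.injective R K hSe] at hS'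
    exact hS (hJm this)
  exact (Units.mkOfMulEqOne _ _ hmain).isUnit

/-- An integral domain is Prüfer iff every localization at a prime is a
valuation domain. -/
theorem isPruferDomain_iff_localization_valuationRing (R : Type*) [CommRing R]
    [IsDomain R] :
    IsPruferDomain R ↔
      ∀ (p : Ideal R) (hp : p.IsPrime), ValuationRing (Localization.AtPrime p) := by
  constructor
  · intro h p hp
    haveI := hp
    haveI : IsDomain (Localization.AtPrime p) := by infer_instance
    rw [ValuationRing.iff_dvd_total]
    refine ⟨fun x y => ?_⟩
    set f := algebraMap R (Localization.AtPrime p)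
    obtain ⟨⟨a, s⟩, hx : IsLocalization.mk' (Localization.AtPrime p) a s = x⟩ :=
      IsLocalization.mk'_surjective p.primeCompl x
    obtain ⟨⟨b, t⟩, hy : IsLocalization.mk' (Localization.AtPrime p) b t = y⟩ :=
      IsLocalization.mk'_surjective p.primeCompl y
    have hxa : x ∣ f a ∧ f a ∣ x := by
      constructor
      · exact ⟨f s, by rw [← hx, IsLocalization.mk'_spec]⟩
      · obtain ⟨c, hc⟩ := (IsLocalization.map_units (Localization.AtPrime p) s).exists_right_inv
        exact ⟨c, by rw [← hx, ← IsLocalization.mk'_spec (Localization.AtPrime p) a s,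
          mul_assoc, hc, mul_one]⟩
    have hyb : y ∣ f b ∧ f b ∣ y := by
      constructor
      · exact ⟨f t, by rw [← hy, IsLocalization.mk'_spec]⟩
      · obtain ⟨c, hc⟩ := (IsLocalization.map_units (Localization.AtPrime p) t).exists_right_inv
        exact ⟨c, by rw [← hy, ← IsLocalization.mk'_spec (Localization.AtPrime p) b t,
          mul_assoc, hc, mul_one]⟩
    rcases pruefer_dvd h p a b with hd | hd
    · exact Or.inl (hxa.1.trans (hd.trans hyb.2))
    · exact Or.inr (hyb.1.trans (hd.trans hxa.2))
  · exact valuation_to_pruefer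
end

section
/- Over a Prüfer domain, every torsion-free module is flat. -/
open TensorProduct LinearMap in
theorem aux_inj_of_isUnit (R : Type*) [CommRing R] [IsDomain R]
    (K : Type*) [Field K] [Algebra R K] [IsFractionRing R K]
    (M : Type*) [AddCommGroup M] [Module R M]
    (htf : ∀ (r : R) (m : M), r • m = 0 → r ≠ 0 → m = 0)
    (I : Ideal R)
    (hu : IsUnit (I : FractionalIdeal (nonZeroDivisors R) K)) :
    Function.Injective (TensorProduct.lift ((lsmul R M).comp I.subtype)) := by
  set φ : I ⊗[R] M →ₗ[R] M := TensorProduct.lift ((lsmul R M).comp I.subtype) with hφ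
  have halg : Function.Injective (algebraMap R K) :=
    IsFractionRing.injective R K
  obtain ⟨u, hu⟩ := hu
  set J : FractionalIdeal (nonZeroDivisors R) K := ↑u⁻¹ with hJdef
  have hIJ : (I : FractionalIdeal (nonZeroDivisors R) K) * J = 1 := by
    rw [← hu, hJdef]; exact_mod_cast u.mul_inv
  set S : Submodule R K := (J : Submodule R K) with hSdef
  -- For b ∈ J and a ∈ I, b * a lands in R.
  have hJI : ∀ (b : S) (a : I), ∃ r : R, algebraMap R K r = (b : K) * algebraMap R K (a : R) := by
    intro b a
    have hmem : (b : K) * algebraMap R K (a : R) ∈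
        ((J : Submodule R K) * ((I : FractionalIdeal (nonZeroDivisors R) K) : Submodule R K)) :=
      Submodule.mul_mem_mul b.2
        (FractionalIdeal.mem_coe.mpr (FractionalIdeal.mem_coeIdeal_of_mem _ a.2))
    rw [← FractionalIdeal.coe_mul, mul_comm J, hIJ] at hmem
    exact (FractionalIdeal.mem_one_iff _).mp (FractionalIdeal.mem_coe.mp hmem)
  choose f hf using hJI
  -- The division-by-`b⁻¹` maps `I →ₗ R`.
  have flin : ∀ b : S, ∃ g : I →ₗ[R] R, ∀ a : I, g a = f b a := by
    intro b
    refine ⟨⟨⟨fun a => f b a, fun a a' => halg ?_⟩, fun r a => halg ?_⟩, fun a => rfl⟩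
    · rw [hf, map_add, hf, hf, Submodule.coe_add, map_add, mul_add]
    · rw [hf, RingHom.id_apply, smul_eq_mul, map_mul, hf,
        show ((r • a : I) : R) = r * (a : R) from rfl, map_mul]
      ring
  choose g hg using flin
  set L : S → (I ⊗[R] M →ₗ[R] M) := fun b => TensorProduct.lift ((lsmul R M).comp (g b)) with hL
  -- Key: if φ x = 0 then L b x = 0, by torsion-freeness.
  have keyA : ∀ (x : I ⊗[R] M), φ x = 0 → ∀ b : S, L b x = 0 := by
    intro x hx b
    obtain ⟨⟨r, d⟩, hrd⟩ := IsLocalization.surj (nonZeroDivisors R) (b : K)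
    have hmap : (d : R) • L b = r • φ := by
      apply TensorProduct.ext'
      intro a m
      simp only [LinearMap.smul_apply, hL, hφ, lift.tmul, coe_comp, Function.comp_apply,
        lsmul_apply, Submodule.coe_subtype, smul_smul]
      congr 1
      apply halg
      rw [map_mul, map_mul, hg, hf, ← hrd]
      ring
    have hd : (d : R) • L b x = 0 := by
      have := LinearMap.congr_fun hmap x
      simp only [LinearMap.smul_apply, hx, smul_zero] at this
      exact this
    exact htf _ _ hd (nonZeroDivisors.coe_ne_zero d)
  -- Represent 1 as a finite sum Σ aₖ bₖ with aₖ ∈ I, bₖ ∈ J.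
  have hone : (1 : K) ∈
      (((I : FractionalIdeal (nonZeroDivisors R) K) : Submodule R K) * S) := by
    rw [← FractionalIdeal.coe_mul, hIJ]
    exact FractionalIdeal.mem_coe.mpr (FractionalIdeal.one_mem_one _)
  have hrep : ∀ v ∈ (((I : FractionalIdeal (nonZeroDivisors R) K) : Submodule R K) * S),
      ∃ l : List (I × S),
        (l.map fun p => algebraMap R K (p.1 : R) * (p.2 : K)).sum = v := by
    intro v hv
    refine Submodule.mul_induction_on hv ?_ ?_
    · intro m hm n hn
      obtain ⟨i, hi, rfl⟩ := (FractionalIdeal.mem_coeIdeal _).mp (FractionalIdeal.mem_coe.mp hm)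
      exact ⟨[(⟨i, hi⟩, ⟨n, hn⟩)], by simp⟩
    · rintro a b ⟨l₁, h₁⟩ ⟨l₂, h₂⟩
      exact ⟨l₁ ++ l₂, by rw [List.map_append, List.sum_append, h₁, h₂]⟩
  obtain ⟨l, hl⟩ := hrep 1 hone
  set F : I × S → (I ⊗[R] M →ₗ[R] I ⊗[R] M) :=
    fun p => (TensorProduct.mk R I M p.1).comp (L p.2) with hF
  have listapply : ∀ (l' : List (I × S)) (x : I ⊗[R] M),
      ((l'.map F).sum) x = (l'.map fun p => F p x).sum := by
    intro l' x
    induction l' with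
    | nil => simp
    | cons p t ih => simp [List.sum_cons, LinearMap.add_apply, ih]
  have hid : (l.map F).sum = LinearMap.id := by
    apply TensorProduct.ext'
    intro a m
    rw [listapply]
    have hterm : ∀ p : I × S,
        F p (a ⊗ₜ[R] m) = ((TensorProduct.mk R I M).flip m) (g p.2 a • p.1) := by
      intro p
      simp only [hF, coe_comp, Function.comp_apply, hL, lift.tmul, lsmul_apply,
        TensorProduct.mk_apply, LinearMap.flip_apply]
      rw [TensorProduct.smul_tmul]
    simp only [hterm]
    have hstep := map_list_sum ((TensorProduct.mk R I M).flip m)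
      (l.map fun p : ↥I × ↥S => g p.2 a • p.1)
    rw [List.map_map] at hstep
    simp only [Function.comp_def] at hstep
    rw [← hstep]
    have hsum : (l.map fun p => g p.2 a • p.1).sum = a := by
      apply Subtype.ext
      apply halg
      have h1 := map_list_sum (I.subtype) (l.map fun p : ↥I × ↥S => g p.2 a • p.1)
      rw [List.map_map] at h1
      simp only [Function.comp_def, Submodule.coe_subtype, SetLike.val_smul, smul_eq_mul] at h1
      rw [h1]
      have h2 := map_list_sum ((algebraMap R K) : R →+* K)
        (l.map fun p : ↥I × ↥S => g p.2 a * (p.1 : R))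
      rw [List.map_map] at h2
      simp only [Function.comp_def] at h2
      rw [h2]
      have hfun : (fun p : ↥I × ↥S => (algebraMap R K) ((g p.2) a * (p.1 : R)))
          = fun p : ↥I × ↥S =>
            ((algebraMap R K) (p.1 : R) * (p.2 : K)) * (algebraMap R K) (a : R) := by
        funext p
        rw [map_mul, hg, hf]
        ring
      rw [hfun, List.sum_map_mul_right, hl, one_mul]
    rw [hsum, LinearMap.flip_apply, TensorProduct.mk_apply, LinearMap.id_apply]
  -- Conclude injectivity.
  rw [injective_iff_map_eq_zero]
  intro x hx
  have hLx : ∀ b : S, L b x = 0 := keyA x hx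
  have : x = (l.map F).sum x := by rw [hid]; rfl
  rw [this, listapply]
  have : ∀ p ∈ l, F p x = 0 := by
    intro p _
    simp [hF, hLx p.2]
  rw [List.sum_eq_zero]
  intro y hy
  obtain ⟨p, hp, rfl⟩ := List.mem_map.mp hy
  exact this p hp

/-- Over a Prüfer domain, every torsion-free module is flat. -/
theorem isPruferDomain_torsionFree_flat (R : Type*) [CommRing R] [IsDomain R]
    (h : IsPruferDomain R) (M : Type*) [AddCommGroup M] [Module R M]
    (htf : ∀ (r : R) (m : M), r • m = 0 → r ≠ 0 → m = 0) :
    Module.Flat R M := by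
  rw [Module.Flat.iff_lift_lsmul_comp_subtype_injective]
  intro I hfg
  by_cases hI : I = ⊥
  · subst hI
    haveI : Subsingleton (⊥ : Ideal R) :=
      ⟨fun a b => Subtype.ext (by rw [(Submodule.mem_bot R).mp a.2, (Submodule.mem_bot R).mp b.2])⟩
    exact Function.injective_of_subsingleton _
  · exact aux_inj_of_isUnit R (FractionRing R) M htf I (h I hfg hI)
end

section
/- Every finitely generated ideal of the ring of algebraic integers (the integral closure of ℤ in an algebraic closure of ℚ) is principal; in particular, the ring of algebraic integers is a Bézout domain. -/
set_option maxHeartbeats 2000000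
set_option synthInstance.maxHeartbeats 1000000

open NumberField
open scoped nonZeroDivisors

open UniqueFactorizationMonoid in
lemma AlgIntAux.ideal_pow_inj {R : Type*} [CommRing R] [IsDomain R] [IsDedekindDomain R]
    {I J : Ideal R} {n : ℕ} (hn : n ≠ 0) (h : I ^ n = J ^ n) : I = J := by
  rcases eq_or_ne I 0 with rfl | hI
  · rw [zero_pow hn] at h
    exact (pow_eq_zero_iff hn).mp h.symm |>.symm
  rcases eq_or_ne J 0 with rfl | hJ
  · rw [zero_pow hn] at h
    exact (pow_eq_zero_iff hn).mp h
  classical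
  have hfac : normalizedFactors I = normalizedFactors J := by
    have h1 : n • normalizedFactors I = n • normalizedFactors J := by
      rw [← normalizedFactors_pow, ← normalizedFactors_pow, h]
    refine Multiset.ext.mpr fun a => ?_
    have := congrArg (Multiset.count a) h1
    rw [Multiset.count_nsmul, Multiset.count_nsmul] at this
    exact Nat.eq_of_mul_eq_mul_left (Nat.pos_of_ne_zero hn) this
  have h1 := prod_normalizedFactors hI
  have h2 := prod_normalizedFactors hJ
  rw [hfac] at h1
  exact associated_iff_eq.mp (h1.symm.trans h2)

lemma AlgIntAux.exists_pow_principal {K : Type*} [Field K] [NumberField K] (I : Ideal (𝓞 K)) :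
    ∃ n : ℕ, n ≠ 0 ∧ ∃ a : 𝓞 K, I ^ n = Ideal.span {a} := by
  rcases eq_or_ne I 0 with rfl | hI
  · exact ⟨1, one_ne_zero, 0, by rw [pow_one]; exact (Submodule.span_zero_singleton _).symm⟩
  have hI' : I ∈ (Ideal (𝓞 K))⁰ := mem_nonZeroDivisors_iff_ne_zero.mpr hI
  set u : (Ideal (𝓞 K))⁰ := ⟨I, hI'⟩ with hu
  set n := Fintype.card (ClassGroup (𝓞 K)) with hn
  have hn0 : n ≠ 0 := Fintype.card_ne_zero
  have h1 : ClassGroup.mk0 (u ^ n) = 1 := by rw [map_pow]; exact pow_card_eq_one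
  have h2 : Submodule.IsPrincipal ((u ^ n : (Ideal (𝓞 K))⁰) : Ideal (𝓞 K)) :=
    (ClassGroup.mk0_eq_one_iff (u ^ n).2).mp (by rwa [Subtype.coe_eta])
  have h3 : ((u ^ n : (Ideal (𝓞 K))⁰) : Ideal (𝓞 K)) = I ^ n := rfl
  rw [h3] at h2
  obtain ⟨a, ha⟩ := h2
  exact ⟨n, hn0, a, ha⟩

/-- The inclusion of the ring of integers of a subfield of `AlgebraicClosure ℚ` into
the ring of all algebraic integers. -/
noncomputable def AlgIntAux.toA (L : IntermediateField ℚ (AlgebraicClosure ℚ)) :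
    𝓞 L →+* integralClosure ℤ (AlgebraicClosure ℚ) where
  toFun z := ⟨algebraMap L (AlgebraicClosure ℚ) (algebraMap (𝓞 L) L z),
    map_isIntegral_int (algebraMap L (AlgebraicClosure ℚ)) z.isIntegral_coe⟩
  map_one' := Subtype.ext (by simp)
  map_mul' x y := Subtype.ext (by simp)
  map_zero' := Subtype.ext (by simp)
  map_add' x y := Subtype.ext (by simp)

lemma AlgIntAux.span_pair_principal (x y : integralClosure ℤ (AlgebraicClosure ℚ)) :
    ∃ d : integralClosure ℤ (AlgebraicClosure ℚ),
      Ideal.span {x, y} = Ideal.span {d} := by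
  set F := AlgebraicClosure ℚ
  have halg : ∀ z : F, IsIntegral ℚ z :=
    fun z => (@Algebra.IsAlgebraic.isAlgebraic ℚ (AlgebraicClosure ℚ) _ _ _ (AlgebraicClosure.isAlgebraic _) z).isIntegral
  -- the number field K = ℚ(x, y)
  set K : IntermediateField ℚ F := IntermediateField.adjoin ℚ {(x : F), (y : F)} with hKdef
  haveI : FiniteDimensional ℚ K := by
    apply IntermediateField.finiteDimensional_adjoin
    intro z _
    exact halg z
  haveI : NumberField K := ⟨⟩
  have hxK : (x : F) ∈ K := IntermediateField.subset_adjoin ℚ _ (Set.mem_insert _ _)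
  have hyK : (y : F) ∈ K :=
    IntermediateField.subset_adjoin ℚ _ (Set.mem_insert_of_mem _ rfl)
  set xK : 𝓞 K := ⟨⟨(x : F), hxK⟩,
    (isIntegral_algebraMap_iff (algebraMap K F).injective).mp x.2⟩ with hxKdef
  set yK : 𝓞 K := ⟨⟨(y : F), hyK⟩,
    (isIntegral_algebraMap_iff (algebraMap K F).injective).mp y.2⟩ with hyKdef
  obtain ⟨n, hn0, a, hIna⟩ := AlgIntAux.exists_pow_principal (Ideal.span {xK, yK})
  -- an n-th root b of a in F
  set aF : F := algebraMap K F (algebraMap (𝓞 K) K a) with haF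
  obtain ⟨b, hb⟩ := IsAlgClosed.exists_pow_nat_eq aF (Nat.pos_of_ne_zero hn0)
  have hbint : IsIntegral ℤ b := by
    refine IsIntegral.of_pow (Nat.pos_of_ne_zero hn0) ?_
    rw [hb]
    exact map_isIntegral_int (algebraMap K F) a.isIntegral_coe
  -- the number field L = ℚ(x, y, b)
  set L : IntermediateField ℚ F := IntermediateField.adjoin ℚ {(x : F), (y : F), b} with hLdef
  haveI : FiniteDimensional ℚ L := by
    apply IntermediateField.finiteDimensional_adjoin
    intro z _
    exact halg z
  haveI : NumberField L := ⟨⟩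
  have hKL : K ≤ L := by
    apply IntermediateField.adjoin.mono
    intro z hz
    rcases hz with rfl | rfl
    · exact Set.mem_insert _ _
    · exact Set.mem_insert_of_mem _ (Set.mem_insert _ _)
  have hbL : b ∈ L := IntermediateField.subset_adjoin ℚ _
    (Set.mem_insert_of_mem _ (Set.mem_insert_of_mem _ rfl))
  set ρ : 𝓞 K →+* 𝓞 L := RingOfIntegers.mapRingHom (IntermediateField.inclusion hKL)
    with hρdef
  set bL : 𝓞 L := ⟨⟨b, hbL⟩, (isIntegral_algebraMap_iff (algebraMap L F).injective).mp hbint⟩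
    with hbLdef
  -- in 𝓞 L : (x, y)^n = (bL)^n  hence (x, y) = (bL)
  have hmap : Ideal.map ρ (Ideal.span {xK, yK}) = Ideal.span {ρ xK, ρ yK} := by
    rw [Ideal.map_span, Set.image_insert_eq, Set.image_singleton]
  have hρa : ρ a = bL ^ n := by
    apply RingOfIntegers.ext
    apply (algebraMap L F).injective
    have h1 : algebraMap L F (algebraMap (𝓞 L) L (ρ a)) = aF := rfl
    have h2 : algebraMap L F (algebraMap (𝓞 L) L (bL ^ n)) = b ^ n := by
      rw [map_pow, map_pow]; rfl
    rw [h1, h2, hb]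
  have hJn : Ideal.span {ρ xK, ρ yK} ^ n = Ideal.span {bL} ^ n := by
    rw [← hmap, ← Ideal.map_pow, hIna, Ideal.map_span, Set.image_singleton, hρa,
      ← Ideal.span_singleton_pow]
  have hJ : Ideal.span {ρ xK, ρ yK} = Ideal.span {bL} :=
    AlgIntAux.ideal_pow_inj hn0 hJn
  -- push to the ring of all algebraic integers
  set σ := AlgIntAux.toA L with hσ
  refine ⟨σ bL, ?_⟩
  have hx : σ (ρ xK) = x := Subtype.ext rfl
  have hy : σ (ρ yK) = y := Subtype.ext rfl
  calc Ideal.span {x, y} = Ideal.span {σ (ρ xK), σ (ρ yK)} := by rw [hx, hy]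
    _ = Ideal.map σ (Ideal.span {ρ xK, ρ yK}) := by
        rw [Ideal.map_span, Set.image_insert_eq, Set.image_singleton]
    _ = Ideal.map σ (Ideal.span {bL}) := by rw [hJ]
    _ = Ideal.span {σ bL} := by rw [Ideal.map_span, Set.image_singleton]

set_option synthInstance.maxHeartbeats 1000000 in
/-- Every finitely generated ideal of the ring of algebraic integers (the
integral closure of ℤ in an algebraic closure of ℚ) is principal; in
particular, the ring of algebraic integers is a Bézout domain. -/
theorem algebraicIntegers_fg_ideal_principal :
    (∀ I : Ideal (integralClosure ℤ (AlgebraicClosure ℚ)),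
        I.FG → Submodule.IsPrincipal I) ∧
      IsBezout (integralClosure ℤ (AlgebraicClosure ℚ)) := by
  have hbez : IsBezout (integralClosure ℤ (AlgebraicClosure ℚ)) := by
    rw [IsBezout.iff_span_pair_isPrincipal]
    intro x y
    obtain ⟨d, hd⟩ := AlgIntAux.span_pair_principal x y
    exact ⟨⟨d, hd⟩⟩
  exact ⟨fun I hI => IsBezout.isPrincipal_of_FG I hI, hbez⟩
end

section
/- Let R be a commutative ring in which every finitely generated torsion-free module is projective (e.g., a Prüfer domain). Then Nil₀(R) = 0: for every finitely generated projective R-module P and nilpotent endomorphism ν of P, the class [(P, ν)] equals [(P, 0)] in K₀ of the category of pairs (projective module, nilpotent endomorphism). -/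
universe u

/-- An object of the exact category `Nil(R)`: a finitely generated projective
`R`-module together with a nilpotent endomorphism. -/
structure NilObj (R : Type u) [CommRing R] : Type (u + 1) where
  carrier : Type u
  [acg : AddCommGroup carrier]
  [mod : Module R carrier]
  projective : Module.Projective R carrier
  finite : Module.Finite R carrier
  nil : carrier →ₗ[R] carrier
  isNil : IsNilpotent nil

attribute [instance] NilObj.acg NilObj.mod

variable (R : Type u) [CommRing R]

/-- The elements of the free abelian group on objects of `Nil(R)` coming from
short exact sequences (with maps commuting with the nilpotent endomorphisms):
`[B] - [A] - [C]` for each short exact sequence `0 → A → B → C → 0`. -/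
def NilRelSet : Set (FreeAbelianGroup (NilObj R)) :=
  { x | ∃ (A B C : NilObj R) (f : A.carrier →ₗ[R] B.carrier)
      (g : B.carrier →ₗ[R] C.carrier),
      Function.Injective f ∧ Function.Surjective g ∧
      LinearMap.range f = LinearMap.ker g ∧
      g ∘ₗ B.nil = C.nil ∘ₗ g ∧ f ∘ₗ A.nil = B.nil ∘ₗ f ∧
      x = FreeAbelianGroup.of B - FreeAbelianGroup.of A - FreeAbelianGroup.of C }

/-- The Grothendieck group `K₀(Nil(R))` of the exact category `Nil(R)`. -/
def K0Nil : Type (u + 1) :=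
  FreeAbelianGroup (NilObj R) ⧸ AddSubgroup.closure (NilRelSet R)

instance : AddCommGroup (K0Nil R) :=
  QuotientAddGroup.Quotient.addCommGroup _

/-- The class of an object of `Nil(R)` in `K₀(Nil(R))`. -/
def K0Nil.mk (N : NilObj R) : K0Nil R :=
  QuotientAddGroup.mk (FreeAbelianGroup.of N)

/-- The object with the same underlying module but zero endomorphism. -/
def NilObj.zeroNil (N : NilObj R) : NilObj R :=
  { carrier := N.carrier, acg := N.acg, mod := N.mod,
    projective := N.projective, finite := N.finite,
    nil := 0, isNil := ⟨1, by simp⟩ }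

theorem nilobj_eq {c : Type u} [AddCommGroup c] [Module R c]
    {p : Module.Projective R c} {fin : Module.Finite R c} {n₁ n₂ : c →ₗ[R] c}
    {h₁ : IsNilpotent n₁} {h₂ : IsNilpotent n₂} (h : n₁ = n₂) :
    (⟨c, p, fin, n₁, h₁⟩ : NilObj R) = ⟨c, p, fin, n₂, h₂⟩ := by
  subst h; rfl

/-- The defining relation of `K₀(Nil(R))`. -/
theorem K0Nil.mk_rel (A B C : NilObj R) (f : A.carrier →ₗ[R] B.carrier)
    (g : B.carrier →ₗ[R] C.carrier)
    (hf : Function.Injective f) (hg : Function.Surjective g)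
    (hrk : LinearMap.range f = LinearMap.ker g)
    (hgc : g ∘ₗ B.nil = C.nil ∘ₗ g) (hfc : f ∘ₗ A.nil = B.nil ∘ₗ f) :
    K0Nil.mk R B = K0Nil.mk R A + K0Nil.mk R C := by
  have hmem : FreeAbelianGroup.of B - FreeAbelianGroup.of A - FreeAbelianGroup.of C ∈
      AddSubgroup.closure (NilRelSet R) :=
    AddSubgroup.subset_closure ⟨A, B, C, f, g, hf, hg, hrk, hgc, hfc, rfl⟩
  have h0 : (QuotientAddGroup.mk (FreeAbelianGroup.of B - FreeAbelianGroup.of A -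
      FreeAbelianGroup.of C) : K0Nil R) = 0 :=
    (QuotientAddGroup.eq_zero_iff _).2 hmem
  rw [QuotientAddGroup.mk_sub, QuotientAddGroup.mk_sub, sub_sub, sub_eq_zero] at h0
  exact h0

/-- Projective modules over a domain are torsion-free. -/
theorem torsionFree_of_projective {M : Type u} [IsDomain R] [AddCommGroup M] [Module R M]
    [Module.Projective R M] (r : R) (m : M) (h : r • m = 0) (hr : r ≠ 0) : m = 0 := by
  obtain ⟨s, hs⟩ := Module.projective_def.1 (inferInstance : Module.Projective R M)
  have h1 : r • s m = 0 := by rw [← map_smul, h, map_zero]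
  have h2 : s m = 0 := by
    ext a
    have := DFunLike.congr_fun h1 a
    simp only [Finsupp.smul_apply, smul_eq_mul, Finsupp.coe_zero, Pi.zero_apply] at this
    rcases mul_eq_zero.1 this with h | h
    · exact absurd h hr
    · simpa using h
  have := hs m
  rw [h2, map_zero] at this
  exact this.symm

theorem nil0_trivial_aux (hR : IsDomain R)
    (hTF : ∀ (M : Type u) [AddCommGroup M] [Module R M], Module.Finite R M →
      (∀ (r : R) (m : M), r • m = 0 → r ≠ 0 → m = 0) → Module.Projective R M) :
    ∀ (k : ℕ) (N : NilObj R), N.nil ^ k = 0 →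
      K0Nil.mk R N = K0Nil.mk R (NilObj.zeroNil R N) := by
  intro k
  induction k with
  | zero =>
    intro N hk
    rw [pow_zero] at hk
    have hsub : ∀ x : N.carrier, x = 0 := by
      intro x
      have := DFunLike.congr_fun hk x
      simpa using this
    have hnil : N.nil = 0 := by
      ext x
      simp [hsub (N.nil x)]
    exact congrArg (K0Nil.mk R) (nilobj_eq R hnil)
  | succ k ih =>
    intro N hk
    haveI := N.projective
    haveI := N.finite
    set ν := N.nil with hν
    set K := LinearMap.ker ν with hK
    -- ν maps K into K (trivially: it kills K)
    have hKK : K ≤ K.comap ν := by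
      intro x hx
      have hx0 : ν x = 0 := hx
      simp [Submodule.mem_comap, hx0]
    -- the quotient module
    set Q := N.carrier ⧸ K with hQ
    haveI hQfin : Module.Finite R Q :=
      Module.Finite.of_surjective K.mkQ (Submodule.mkQ_surjective K)
    -- the quotient is torsion-free, hence projective
    have hQtf : ∀ (r : R) (m : Q), r • m = 0 → r ≠ 0 → m = 0 := by
      intro r m hm hr
      obtain ⟨x, rfl⟩ := Submodule.mkQ_surjective K m
      rw [← map_smul, Submodule.mkQ_apply, Submodule.Quotient.mk_eq_zero] at hm
      have : ν (r • x) = 0 := hm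
      rw [map_smul] at this
      have hx : ν x = 0 := torsionFree_of_projective R r (ν x) this hr
      rw [Submodule.mkQ_apply, Submodule.Quotient.mk_eq_zero]
      exact hx
    haveI hQproj : Module.Projective R Q := hTF Q hQfin hQtf
    -- split the surjection N.carrier → Q
    obtain ⟨h, hh⟩ := Module.projective_lifting_property K.mkQ LinearMap.id
      (Submodule.mkQ_surjective K)
    -- projection onto K
    have hπmem : ∀ x : N.carrier, x - h (K.mkQ x) ∈ K := by
      intro x
      have : K.mkQ (x - h (K.mkQ x)) = 0 := by
        rw [map_sub]
        have := DFunLike.congr_fun hh (K.mkQ x)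
        simp only [LinearMap.coe_comp, Function.comp_apply, LinearMap.id_coe, id_eq] at this
        rw [this, sub_self]
      exact (Submodule.Quotient.mk_eq_zero K).1 this
    let π : N.carrier →ₗ[R] K :=
      LinearMap.codRestrict K (LinearMap.id - h ∘ₗ K.mkQ) hπmem
    have hπK : ∀ x : K, π (x : N.carrier) = x := by
      intro x
      apply Subtype.ext
      have hx0 : K.mkQ (x : N.carrier) = 0 := (Submodule.Quotient.mk_eq_zero K).2 x.2
      have hval : (↑(π x) : N.carrier) = (x : N.carrier) - h (K.mkQ (x : N.carrier)) := rfl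
      rw [hval, hx0, map_zero, sub_zero]
    have hsplit : π ∘ₗ K.subtype = LinearMap.id := by
      ext x
      simpa using hπK x
    haveI hKproj : Module.Projective R K :=
      Module.Projective.of_split K.subtype π hsplit
    haveI hKfin : Module.Finite R K :=
      Module.Finite.of_surjective π (fun x => ⟨(x : N.carrier), hπK x⟩)
    -- the objects A and C
    set A : NilObj R :=
      { carrier := K, projective := hKproj, finite := hKfin,
        nil := 0, isNil := ⟨1, by simp⟩ } with hA
    have hνQle : ν ^ k ∈ {f : Module.End R N.carrier | K ≤ K.comap f} :=
      K.le_comap_pow_of_le_comap hKK k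
    set νQ : Q →ₗ[R] Q := K.mapQ K ν hKK with hνQ
    have hνQnil : νQ ^ k = 0 := by
      rw [hνQ, ← Submodule.mapQ_pow K hKK k]
      apply Submodule.linearMap_qext
      ext x
      simp only [LinearMap.coe_comp, Function.comp_apply, Submodule.mkQ_apply,
        Submodule.mapQ_apply, LinearMap.zero_comp, LinearMap.zero_apply]
      rw [Submodule.Quotient.mk_eq_zero]
      show ν ((ν ^ k) x) = 0
      have : (ν ^ (k + 1)) x = 0 := by rw [hk]; rfl
      rw [pow_succ'] at this
      exact this
    set C : NilObj R :=
      { carrier := Q, projective := hQproj, finite := hQfin,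
        nil := νQ, isNil := ⟨k, hνQnil⟩ } with hC
    -- the short exact sequence for N
    have hcomm1 : K.mkQ ∘ₗ ν = νQ ∘ₗ K.mkQ := (Submodule.mapQ_mkQ K K ν).symm
    have hcomm2 : K.subtype ∘ₗ (0 : K →ₗ[R] K) = ν ∘ₗ K.subtype := by
      ext x
      have : ν (x : N.carrier) = 0 := x.2
      simp [this]
    have rel1 : K0Nil.mk R N = K0Nil.mk R A + K0Nil.mk R C :=
      K0Nil.mk_rel R A N C K.subtype K.mkQ (Submodule.injective_subtype K)
        (Submodule.mkQ_surjective K)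
        (by rw [Submodule.range_subtype, Submodule.ker_mkQ]) hcomm1 hcomm2
    -- the short exact sequence for the zeroed objects
    have rel2 : K0Nil.mk R (NilObj.zeroNil R N) =
        K0Nil.mk R A + K0Nil.mk R (NilObj.zeroNil R C) :=
      K0Nil.mk_rel R A (NilObj.zeroNil R N) (NilObj.zeroNil R C) K.subtype K.mkQ
        (Submodule.injective_subtype K) (Submodule.mkQ_surjective K)
        ((Submodule.range_subtype K).trans (Submodule.ker_mkQ K).symm)
        (by ext x; show K.mkQ 0 = 0; exact map_zero _)
        (by ext x; show K.subtype (0 : K) = 0; exact map_zero _)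
    have hCk : C.nil ^ k = 0 := hνQnil
    rw [rel1, ih C hCk, rel2]

/-- If every finitely generated torsion-free module over the domain `R` is
projective (e.g. `R` a Prüfer domain), then `Nil₀(R) = 0`: for every finitely
generated projective `R`-module `P` with nilpotent endomorphism `ν`, the class
of `(P, ν)` in `K₀(Nil(R))` equals the class of `(P, 0)`. -/
theorem nil0_trivial (R : Type u) [CommRing R] [IsDomain R]
    (hTF : ∀ (M : Type u) [AddCommGroup M] [Module R M], Module.Finite R M →
      (∀ (r : R) (m : M), r • m = 0 → r ≠ 0 → m = 0) → Module.Projective R M)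
    (N : NilObj R) :
    K0Nil.mk R N =
      K0Nil.mk R
        { carrier := N.carrier, acg := N.acg, mod := N.mod,
          projective := N.projective, finite := N.finite,
          nil := 0, isNil := ⟨1, by simp⟩ } := by
  obtain ⟨k, hk⟩ := N.isNil
  exact nil0_trivial_aux R inferInstance hTF k N hk
end
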